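/- Let Ω ⊂ ℝⁿ be open and ℤⁿ-periodic (Ω + ℤⁿ = Ω) with C² boundary, so that the distance function d(x) = dist(x, ∂Ω) is C² on a uniform strip U_ρ = {x : d(x) < ρ} for some ρ > 0. Then there exists a C¹ map ζ : Ω̄ → ℝⁿ such that x + δ·ζ(x) ∈ Ω for all x ∈ Ω̄ and all δ ∈ (0,1). -/

import Mathlib

set_option linter.unusedSectionVars false
open Metric Set Filter Topology RealInnerProductSpace

variable {E : Type*} [NormedAddCommGroup E] [InnerProductSpace ℝ E] [ProperSpace E]



/-- points of positive distance inside closure are interior, with a ball around them -/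
theorem aux_ball {Ω : Set E} (hopen : IsOpen Ω)
    {x : E} (hx : x ∈ closure Ω) (hpos : 0 < infDist x (frontier Ω)) :
    ball x (infDist x (frontier Ω)) ⊆ Ω := by
  set d := infDist x (frontier Ω) with hd
  have hballΓ : ∀ y ∈ ball x d, y ∉ frontier Ω := by
    intro y hy hyΓ
    have : d ≤ dist x y := infDist_le_dist_of_mem hyΓ
    rw [mem_ball, dist_comm] at hy
    linarith
  have hxΩ : x ∈ Ω := by
    have hxf : x ∉ frontier Ω := hballΓ x (mem_ball_self hpos)
    have : x ∈ closure Ω \ frontier Ω := ⟨hx, hxf⟩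
    rwa [closure_diff_frontier, hopen.interior_eq] at this
  have hsub : ball x d ⊆ Ω ∪ (closure Ω)ᶜ := by
    intro y hy
    have hyf := hballΓ y hy
    by_cases hyc : y ∈ closure Ω
    · left
      have : y ∈ closure Ω \ frontier Ω := ⟨hyc, hyf⟩
      rwa [closure_diff_frontier, hopen.interior_eq] at this
    · right; exact hyc
  refine IsPreconnected.subset_left_of_subset_union hopen
    (isClosed_closure.isOpen_compl) ?_ hsub ⟨x, mem_ball_self hpos, hxΩ⟩
    (convex_ball x d).isPreconnected
  exact disjoint_compl_right.mono_left subset_closure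

theorem aux_memΩ {Ω : Set E} (hopen : IsOpen Ω)
    {x : E} (hx : x ∈ closure Ω) (hpos : 0 < infDist x (frontier Ω)) : x ∈ Ω :=
  aux_ball hopen hx hpos (mem_ball_self hpos)

theorem aux_dpos {Ω : Set E} (hopen : IsOpen Ω) (hne : (frontier Ω).Nonempty)
    {x : E} (hx : x ∈ Ω) : 0 < infDist x (frontier Ω) := by
  rw [← (isClosed_frontier).notMem_iff_infDist_pos hne]
  intro hxf
  have : x ∈ Ω ∩ frontier Ω := ⟨hx, hxf⟩
  rw [hopen.inter_frontier_eq] at this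
  exact this

theorem aux_norm_le {Ω : Set E} {x : E} {f' : E →L[ℝ] ℝ}
    (hf : HasFDerivAt (fun y => infDist y (frontier Ω)) f' x) : ‖f'‖ ≤ 1 := by
  have := hf.le_of_lipschitz (lipschitz_infDist_pt (frontier Ω))
  simpa using this

theorem aux_norm_eq {Ω : Set E} (hne : (frontier Ω).Nonempty)
    {x : E} (hx : 0 < infDist x (frontier Ω)) {f' : E →L[ℝ] ℝ}
    (hf : HasFDerivAt (fun y => infDist y (frontier Ω)) f' x) : ‖f'‖ = 1 := by
  set d : E → ℝ := fun y => infDist y (frontier Ω) with hdd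
  obtain ⟨p, hpΓ, hpd⟩ := isClosed_frontier.exists_infDist_eq_dist hne x
  have hD : dist x p = d x := hpd.symm
  have hDpos : 0 < dist x p := by rw [hD]; exact hx
  set u : E := ‖p - x‖⁻¹ • (p - x) with hu
  have hnormpx : ‖p - x‖ = d x := by rw [← hD, dist_eq_norm, norm_sub_rev]
  have hupos : ‖p - x‖ ≠ 0 := by rw [hnormpx]; exact ne_of_gt hx
  have hunorm : ‖u‖ = 1 := by
    rw [hu, norm_smul, norm_inv, norm_norm, inv_mul_cancel₀ hupos]
  have hpx : p = x + (d x) • u := by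
    rw [hu, smul_smul, ← hnormpx, mul_inv_cancel₀ hupos, one_smul]
    abel
  have hψ : ∀ s ∈ Icc (0:ℝ) (d x), d (x + s • u) = d x - s := by
    intro s hs
    obtain ⟨hs0, hs1⟩ := hs
    have hle : d (x + s • u) ≤ d x - s := by
      have : d (x + s • u) ≤ dist (x + s • u) p := infDist_le_dist_of_mem hpΓ
      refine this.trans ?_
      rw [dist_eq_norm, hpx]
      have : x + s • u - (x + d x • u) = (s - d x) • u := by
        rw [sub_smul]; abel
      rw [this, norm_smul, hunorm, mul_one, Real.norm_eq_abs, abs_of_nonpos (by linarith)]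
      linarith
    have hge : d x - s ≤ d (x + s • u) := by
      have h1 : d x ≤ d (x + s • u) + dist x (x + s • u) :=
        infDist_le_infDist_add_dist
      have h2 : dist x (x + s • u) = s := by
        rw [dist_eq_norm]
        simp [norm_smul, hunorm, abs_of_nonneg hs0]
      linarith
    linarith
  -- derivative of s ↦ d (x + s • u) at 0 within Icc
  have hline : HasDerivAt (fun s : ℝ => x + s • u) u 0 := by
    simpa using ((hasDerivAt_id (0:ℝ)).smul_const u).const_add x
  have hcomp : HasDerivAt (fun s : ℝ => d (x + s • u)) (f' u) 0 :=
    by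
    have hf' : HasFDerivAt d f' (x + (0:ℝ) • u) := by simpa using hf
    exact hf'.comp_hasDerivAt 0 hline
  have hW : HasDerivWithinAt (fun s : ℝ => d (x + s • u)) (f' u) (Icc 0 (d x)) 0 :=
    hcomp.hasDerivWithinAt
  have hW2 : HasDerivWithinAt (fun s : ℝ => d x - s) (f' u) (Icc 0 (d x)) 0 := by
    refine hW.congr (fun s hs => (hψ s hs).symm) ?_
    simpa using (hψ 0 ⟨le_refl 0, le_of_lt hx⟩).symm
  have hW3 : HasDerivWithinAt (fun s : ℝ => d x - s) (-1 : ℝ) (Icc 0 (d x)) 0 := by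
    simpa using ((hasDerivAt_id (0:ℝ)).const_sub (d x)).hasDerivWithinAt
  have hU : UniqueDiffWithinAt ℝ (Icc (0:ℝ) (d x)) 0 :=
    (uniqueDiffOn_Icc hx) 0 ⟨le_refl 0, le_of_lt hx⟩
  have heq : f' u = -1 := hU.eq_deriv _ hW2 hW3
  have hge1 : 1 ≤ ‖f'‖ := by
    have := f'.le_opNorm u
    rw [heq, hunorm, mul_one] at this
    simpa using this
  exact le_antisymm (aux_norm_le hf) hge1

theorem aux_osc {Ω : Set E} (hopen : IsOpen Ω) {ρ : ℝ}
    (hd : ContDiffOn ℝ 2 (fun y => infDist y (frontier Ω))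
      {x | x ∈ closure Ω ∧ infDist x (frontier Ω) < ρ})
    {x₀ : E} (hx₀ : x₀ ∈ closure Ω) (hx₀ρ : infDist x₀ (frontier Ω) < ρ)
    {ε : ℝ} (hε : 0 < ε) :
    ∃ r > 0, ∀ y, y ∈ Ω → dist y x₀ < r → infDist y (frontier Ω) < ρ →
      ∀ y', y' ∈ Ω → dist y' x₀ < r → infDist y' (frontier Ω) < ρ →
      ‖fderiv ℝ (fun z => infDist z (frontier Ω)) y
        - fderiv ℝ (fun z => infDist z (frontier Ω)) y'‖ < ε := by
  set d : E → ℝ := fun y => infDist y (frontier Ω) with hdd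
  set S : Set E := {x | x ∈ closure Ω ∧ d x < ρ} with hS
  have hx₀S : x₀ ∈ S := ⟨hx₀, hx₀ρ⟩
  have h1 : ContDiffWithinAt ℝ 1 d S x₀ := (hd x₀ hx₀S).of_le (by norm_num)
  have h1' : ContDiffWithinAt ℝ ((1:ℕ) : WithTop ℕ∞) d S x₀ := by exact_mod_cast h1
  obtain ⟨u, hu, p, hp⟩ := contDiffWithinAt_nat.1 h1'
  rw [insert_eq_of_mem hx₀S] at hu
  obtain ⟨O, hOopen, hx₀O, hOu⟩ := mem_nhdsWithin.1 hu
  set u' : Set E := O ∩ S with hu'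
  have hp' : HasFTaylorSeriesUpToOn 1 d p u' := hp.mono hOu
  have hdcont : Continuous d := continuous_infDist_pt (frontier Ω)
  have hρopen : IsOpen {x : E | d x < ρ} := isOpen_lt hdcont continuous_const
  have hΩopen' : IsOpen (O ∩ Ω ∩ {x : E | d x < ρ}) := (hOopen.inter hopen).inter hρopen
  have key : ∀ y ∈ O, y ∈ Ω → d y < ρ →
      fderiv ℝ d y = continuousMultilinearCurryFin1 ℝ E ℝ (p y 1) := by
    intro y hyO hyΩ hyρ
    have hyu' : y ∈ u' := ⟨hyO, subset_closure hyΩ, hyρ⟩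
    have hnb : u' ∈ nhds y := by
      have : O ∩ Ω ∩ {x : E | d x < ρ} ⊆ u' := by
        rintro z ⟨⟨hzO, hzΩ⟩, hzρ⟩
        exact ⟨hzO, subset_closure hzΩ, hzρ⟩
      exact Filter.mem_of_superset
        (hΩopen'.mem_nhds ⟨⟨hyO, hyΩ⟩, hyρ⟩) this
    have hW : HasFDerivWithinAt d
        ((continuousMultilinearCurryFin1 ℝ E ℝ) (p y 1)) u' y :=
      hp'.hasFDerivWithinAt one_ne_zero hyu'
    exact (hW.hasFDerivAt hnb).fderiv
  -- continuity of p · 1 at x₀ within u'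
  have hx₀u' : x₀ ∈ u' := ⟨hx₀O, hx₀S⟩
  have hc : ContinuousWithinAt (fun y => p y 1) u' x₀ :=
    (hp'.cont 1 le_rfl) x₀ hx₀u'
  have hball : {q : E[×1]→L[ℝ] ℝ | ‖q - p x₀ 1‖ < ε/2} ∈ nhds (p x₀ 1) := by
    have : IsOpen {q : E[×1]→L[ℝ] ℝ | ‖q - p x₀ 1‖ < ε/2} := by
      have : Continuous (fun q : E[×1]→L[ℝ] ℝ => ‖q - p x₀ 1‖) :=
        (continuous_id.sub continuous_const).norm
      exact isOpen_lt this continuous_const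
    exact this.mem_nhds (by simp [half_pos hε])
  have hpre := hc hball
  obtain ⟨O₂, hO₂open, hx₀O₂, hO₂sub⟩ := mem_nhdsWithin.1 hpre
  obtain ⟨r, hr, hrsub⟩ := Metric.isOpen_iff.1 (hOopen.inter hO₂open) x₀ ⟨hx₀O, hx₀O₂⟩
  refine ⟨r, hr, ?_⟩
  intro y hyΩ hyd hyρ y' hy'Ω hy'd hy'ρ
  have hy : y ∈ O ∩ O₂ := hrsub (by rwa [mem_ball])
  have hy' : y' ∈ O ∩ O₂ := hrsub (by rwa [mem_ball])
  have hyu' : y ∈ u' := ⟨hy.1, subset_closure hyΩ, hyρ⟩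
  have hy'u' : y' ∈ u' := ⟨hy'.1, subset_closure hy'Ω, hy'ρ⟩
  have e1 : ‖p y 1 - p x₀ 1‖ < ε/2 := hO₂sub ⟨hy.2, hyu'⟩
  have e2 : ‖p y' 1 - p x₀ 1‖ < ε/2 := hO₂sub ⟨hy'.2, hy'u'⟩
  rw [key y hy.1 hyΩ hyρ, key y' hy'.1 hy'Ω hy'ρ]
  rw [← map_sub]
  rw [(continuousMultilinearCurryFin1 ℝ E ℝ).norm_map]
  calc ‖p y 1 - p y' 1‖ ≤ ‖p y 1 - p x₀ 1‖ + ‖p x₀ 1 - p y' 1‖ := by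
        simpa using norm_sub_le_norm_sub_add_norm_sub (p y 1) (p x₀ 1) (p y' 1)
    _ < ε/2 + ε/2 := add_lt_add e1 (by rw [norm_sub_rev]; exact e2)
    _ = ε := by ring

theorem aux_S_nhds {Ω : Set E} (hopen : IsOpen Ω) {ρ : ℝ} {z : E}
    (hz : z ∈ Ω) (hzρ : infDist z (frontier Ω) < ρ) :
    {x : E | x ∈ closure Ω ∧ infDist x (frontier Ω) < ρ} ∈ nhds z := by
  have hρopen : IsOpen (Ω ∩ {x : E | infDist x (frontier Ω) < ρ}) :=
    hopen.inter (isOpen_lt (continuous_infDist_pt (frontier Ω)) continuous_const)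
  exact Filter.mem_of_superset (hρopen.mem_nhds ⟨hz, hzρ⟩)
    (fun w hw => ⟨subset_closure hw.1, hw.2⟩)

theorem aux_diff {Ω : Set E} (hopen : IsOpen Ω) (hne : (frontier Ω).Nonempty) {ρ : ℝ}
    (hd : ContDiffOn ℝ 2 (fun y => infDist y (frontier Ω))
      {x | x ∈ closure Ω ∧ infDist x (frontier Ω) < ρ})
    {z : E} (hz : z ∈ Ω) (hzρ : infDist z (frontier Ω) < ρ) :
    HasFDerivAt (fun y => infDist y (frontier Ω))
      (fderiv ℝ (fun y => infDist y (frontier Ω)) z) z ∧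
    ‖fderiv ℝ (fun y => infDist y (frontier Ω)) z‖ = 1 := by
  have hca : ContDiffAt ℝ 2 (fun y => infDist y (frontier Ω)) z :=
    hd.contDiffAt (aux_S_nhds hopen hz hzρ)
  have hdiff : DifferentiableAt ℝ (fun y => infDist y (frontier Ω)) z :=
    hca.differentiableAt (by norm_num)
  exact ⟨hdiff.hasFDerivAt, aux_norm_eq hne (aux_dpos hopen hne hz) hdiff.hasFDerivAt⟩


theorem aux_flow {Ω : Set E} (hopen : IsOpen Ω) (hne : (frontier Ω).Nonempty) {ρ : ℝ}
    (hρ : 0 < ρ)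
    (hd : ContDiffOn ℝ 2 (fun y => infDist y (frontier Ω))
      {x | x ∈ closure Ω ∧ infDist x (frontier Ω) < ρ})
    {x₀ : E} (hx₀ : x₀ ∈ frontier Ω) :
    ∃ r > 0, r < ρ/4 ∧ ∀ y ∈ Ω, dist y x₀ < r → ∀ t : ℝ, 0 ≤ t → t ≤ r →
      y + t • ((InnerProductSpace.toDual ℝ E).symm
          (fderiv ℝ (fun z => infDist z (frontier Ω)) y)) ∈ Ω ∧
      infDist y (frontier Ω) + t/2 ≤
        infDist (y + t • ((InnerProductSpace.toDual ℝ E).symm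
          (fderiv ℝ (fun z => infDist z (frontier Ω)) y))) (frontier Ω) := by
  set d : E → ℝ := fun y => infDist y (frontier Ω) with hdd
  have hx₀c : x₀ ∈ closure Ω := frontier_subset_closure hx₀
  have hdx₀ : d x₀ = 0 := infDist_zero_of_mem hx₀
  obtain ⟨r₀, hr₀, hosc⟩ := aux_osc hopen hd hx₀c (show infDist x₀ (frontier Ω) < ρ by rw [show infDist x₀ (frontier Ω) = 0 from infDist_zero_of_mem hx₀]; exact hρ)
    (ε := 1/2) (by norm_num)
  refine ⟨min (r₀/4) (ρ/8), by positivity, by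
      have := min_le_right (r₀/4) (ρ/8); linarith, ?_⟩
  set r := min (r₀/4) (ρ/8) with hrdef
  have hrr₀ : r ≤ r₀/4 := min_le_left _ _
  have hrρ : r ≤ ρ/8 := min_le_right _ _
  intro y hyΩ hyd t ht0 htr
  have hdy : d y < r := lt_of_le_of_lt (infDist_le_dist_of_mem hx₀) hyd
  have hyρ : d y < ρ := by linarith
  set w : E := (InnerProductSpace.toDual ℝ E).symm (fderiv ℝ d y) with hwdef
  have hwnorm : ‖w‖ = 1 := by
    rw [hwdef, LinearIsometryEquiv.norm_map]
    exact (aux_diff hopen hne hd hyΩ hyρ).2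
  have hyr₀ : dist y x₀ < r₀ := by linarith
  have hlow : ∀ z, z ∈ Ω → dist z x₀ < r₀ → d z < ρ →
      (1:ℝ)/2 ≤ (fderiv ℝ d z) w := by
    intro z hz hzd hzρ
    have h1 : (fderiv ℝ d y) w = 1 := by
      have e : ⟪w, w⟫ = (fderiv ℝ d y) w := InnerProductSpace.toDual_symm_apply
      have e2 : ⟪w, w⟫ = ‖w‖ * ‖w‖ := real_inner_self_eq_norm_mul_norm w
      rw [← e, e2, hwnorm]; norm_num
    have h2 : ‖fderiv ℝ d y - fderiv ℝ d z‖ < 1/2 :=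
      hosc y hyΩ hyr₀ hyρ z hz hzd hzρ
    have h3 : ‖(fderiv ℝ d y - fderiv ℝ d z) w‖ ≤
        ‖fderiv ℝ d y - fderiv ℝ d z‖ * ‖w‖ :=
      (fderiv ℝ d y - fderiv ℝ d z).le_opNorm w
    rw [hwnorm, mul_one] at h3
    have h4 : (fderiv ℝ d y - fderiv ℝ d z) w = (fderiv ℝ d y) w - (fderiv ℝ d z) w := rfl
    rw [h4] at h3
    have h5 : |(fderiv ℝ d y) w - (fderiv ℝ d z) w| < 1/2 := by
      rw [← Real.norm_eq_abs]; exact h3.trans_lt h2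
    rw [abs_lt] at h5
    linarith [h5.1, h5.2, h1.symm ▸ h5]
  -- monotonicity claim
  have hM : ∀ τ : ℝ, 0 ≤ τ → τ ≤ t → (∀ s, 0 ≤ s → s ≤ τ → y + s • w ∈ Ω) →
      d y + τ/2 ≤ d (y + τ • w) := by
    intro τ hτ0 hτt hmem
    have hzfacts : ∀ s, 0 ≤ s → s ≤ τ →
        y + s • w ∈ Ω ∧ dist (y + s • w) x₀ < r₀ ∧ d (y + s • w) < ρ := by
      intro s h0 h1
      have hsr : s ≤ r := le_trans h1 (le_trans hτt htr)
      have hdisty : dist (y + s • w) y = s := by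
        rw [dist_eq_norm, add_sub_cancel_left, norm_smul, hwnorm,
          Real.norm_eq_abs, abs_of_nonneg h0, mul_one]
      constructor
      · exact hmem s h0 h1
      constructor
      · calc dist (y + s • w) x₀ ≤ dist (y + s • w) y + dist y x₀ := dist_triangle _ _ _
          _ < r + r := by rw [hdisty]; exact add_lt_add_of_le_of_lt hsr hyd
          _ ≤ r₀ := by linarith
      · calc d (y + s • w) ≤ d y + dist (y + s • w) y := infDist_le_infDist_add_dist
          _ < r + r := by rw [hdisty]; exact add_lt_add_of_lt_of_le hdy hsr
          _ ≤ ρ := by linarith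
    have hderiv : ∀ s ∈ Icc (0:ℝ) τ,
        HasDerivAt (fun σ : ℝ => d (y + σ • w)) ((fderiv ℝ d (y + s • w)) w) s := by
      intro s hs
      obtain ⟨hzΩ, _, hzρ⟩ := hzfacts s hs.1 hs.2
      have hf := (aux_diff hopen hne hd hzΩ hzρ).1
      have hline : HasDerivAt (fun σ : ℝ => y + σ • w) w s := by
        simpa using ((hasDerivAt_id s).smul_const w).const_add y
      have : HasFDerivAt d (fderiv ℝ d (y + s • w)) ((fun σ : ℝ => y + σ • w) s) := by
        simpa using hf
      exact this.comp_hasDerivAt s hline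
    set F : ℝ → ℝ := fun s => d (y + s • w) - s/2 with hF
    have hmono : MonotoneOn F (Icc 0 τ) := by
      apply monotoneOn_of_deriv_nonneg (convex_Icc 0 τ)
      · apply ContinuousOn.sub
        · exact ((continuous_infDist_pt (frontier Ω)).comp
            (continuous_const.add (continuous_id.smul continuous_const))).continuousOn
        · exact (continuous_id.div_const 2).continuousOn
      · intro s hs
        rw [interior_Icc] at hs
        have hD : HasDerivAt F ((fderiv ℝ d (y + s • w)) w - 1/2) s :=
          (hderiv s ⟨hs.1.le, hs.2.le⟩).sub (by simpa using (hasDerivAt_id s).div_const 2)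
        exact hD.differentiableAt.differentiableWithinAt
      · intro s hs
        rw [interior_Icc] at hs
        have hD : HasDerivAt F ((fderiv ℝ d (y + s • w)) w - 1/2) s :=
          (hderiv s ⟨hs.1.le, hs.2.le⟩).sub (by simpa using (hasDerivAt_id s).div_const 2)
        rw [hD.deriv]
        obtain ⟨hzΩ, hzd, hzρ⟩ := hzfacts s hs.1.le hs.2.le
        linarith [hlow _ hzΩ hzd hzρ]
    have hkey := hmono ⟨le_rfl, hτ0⟩ ⟨hτ0, le_rfl⟩ hτ0
    have h00 : F 0 = d y := by simp [hF]
    have h11 : F τ = d (y + τ • w) - τ/2 := rfl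
    rw [h00, h11] at hkey
    linarith
  -- continuous induction
  set B : Set ℝ := {τ | τ ∈ Icc 0 t ∧ ∀ s, 0 ≤ s → s ≤ τ → y + s • w ∈ Ω} with hB
  have h0B : (0:ℝ) ∈ B := by
    refine ⟨⟨le_rfl, ht0⟩, fun s h0 h1 => ?_⟩
    have : s = 0 := le_antisymm h1 h0
    subst this; simpa using hyΩ
  have hBbdd : BddAbove B := ⟨t, fun τ hτ => hτ.1.2⟩
  have hBne : B.Nonempty := ⟨0, h0B⟩
  set c := sSup B with hc
  have hc0 : 0 ≤ c := le_csSup hBbdd h0B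
  have hct : c ≤ t := csSup_le hBne (fun τ hτ => hτ.1.2)
  have hbelow : ∀ s, 0 ≤ s → s < c → y + s • w ∈ Ω := by
    intro s h0 hsc
    obtain ⟨τ, hτB, hsτ⟩ := exists_lt_of_lt_csSup hBne hsc
    exact hτB.2 s h0 hsτ.le
  have hcΩ : y + c • w ∈ Ω ∧ d y + c/2 ≤ d (y + c • w) := by
    rcases eq_or_lt_of_le hc0 with hc0' | hc0'
    · constructor
      · rw [← hc0']; simpa using hyΩ
      · rw [← hc0']; simp
    · have hlim1 : Tendsto (fun s : ℝ => y + s • w) (nhdsWithin c (Iio c))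
          (nhds (y + c • w)) :=
        ((continuous_const.add (continuous_id.smul continuous_const)).tendsto c).mono_left
          nhdsWithin_le_nhds
      have hIoo : Ioo (0:ℝ) c ∈ nhdsWithin c (Iio c) :=
        Ioo_mem_nhdsLT_of_mem ⟨hc0', le_rfl⟩
      have hev : ∀ᶠ s in nhdsWithin c (Iio c),
          (y + s • w ∈ Ω ∧ d y + s/2 ≤ d (y + s • w)) := by
        filter_upwards [hIoo] with s hs
        refine ⟨hbelow s hs.1.le hs.2, ?_⟩
        exact hM s hs.1.le (hs.2.le.trans hct)
          (fun s' h0 h1 => hbelow s' h0 (lt_of_le_of_lt h1 hs.2))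
      have hmemclos : y + c • w ∈ closure Ω :=
        mem_closure_of_tendsto hlim1 (hev.mono fun s hs => hs.1)
      have hdlim : Tendsto (fun s : ℝ => d (y + s • w)) (nhdsWithin c (Iio c))
          (nhds (d (y + c • w))) :=
        ((continuous_infDist_pt (frontier Ω)).tendsto _).comp hlim1
      have hllim : Tendsto (fun s : ℝ => d y + s/2) (nhdsWithin c (Iio c))
          (nhds (d y + c/2)) :=
        ((continuous_const.add (continuous_id.div_const 2)).tendsto c).mono_left
          nhdsWithin_le_nhds
      have hineq : d y + c/2 ≤ d (y + c • w) :=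
        le_of_tendsto_of_tendsto hllim hdlim (hev.mono fun s hs => hs.2)
      have hdypos : 0 < d y := aux_dpos hopen hne hyΩ
      exact ⟨aux_memΩ hopen hmemclos (by linarith), hineq⟩
  have hceqt : c = t := by
    by_contra hne'
    have hclt : c < t := lt_of_le_of_ne hct hne'
    have hdc : 0 < d (y + c • w) := aux_dpos hopen hne hcΩ.1
    set η := min (t - c) (d (y + c • w)) with hη
    have hηpos : 0 < η := lt_min (by linarith) hdc
    have hnew : c + η/2 ∈ B := by
      refine ⟨⟨by linarith, by
        have : η ≤ t - c := min_le_left _ _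
        linarith⟩, ?_⟩
      intro s h0 h1
      rcases le_or_gt s c with hsc | hsc
      · rcases lt_or_eq_of_le hsc with hlt | heq
        · exact hbelow s h0 hlt
        · rw [heq]; exact hcΩ.1
      · have hdist : dist (y + s • w) (y + c • w) = s - c := by
          rw [dist_eq_norm]
          have e : y + s • w - (y + c • w) = (s - c) • w := by rw [sub_smul]; abel
          rw [e, norm_smul, hwnorm, mul_one, Real.norm_eq_abs, abs_of_nonneg (by linarith)]
        apply aux_ball hopen (subset_closure hcΩ.1) hdc
        rw [mem_ball, hdist]
        have hηd : η ≤ d (y + c • w) := min_le_right _ _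
        linarith
    have : c + η/2 ≤ c := le_csSup hBbdd hnew
    linarith
  refine ⟨?_, ?_⟩
  · have := hcΩ.1; rwa [hceqt] at this
  · have := hcΩ.2; rwa [hceqt] at this

theorem aux_unique {Ω : Set E} (hopen : IsOpen Ω) (hne : (frontier Ω).Nonempty) {ρ : ℝ}
    (hρ : 0 < ρ)
    (hd : ContDiffOn ℝ 2 (fun y => infDist y (frontier Ω))
      {x | x ∈ closure Ω ∧ infDist x (frontier Ω) < ρ}) :
    UniqueDiffOn ℝ {x | x ∈ closure Ω ∧ infDist x (frontier Ω) < ρ} := by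
  set d : E → ℝ := fun y => infDist y (frontier Ω) with hdd
  set S : Set E := {x | x ∈ closure Ω ∧ d x < ρ} with hS
  intro x hx
  obtain ⟨hxc, hxρ⟩ := hx
  rcases (infDist_nonneg : 0 ≤ d x).lt_or_eq with hpos | hzero
  · exact uniqueDiffWithinAt_of_mem_nhds (aux_S_nhds hopen (aux_memΩ hopen hxc hpos) hxρ)
  · have hxf : x ∈ frontier Ω := by
      have hxn : x ∉ Ω := fun hxΩ => by
        have h2 := aux_dpos hopen hne hxΩ; rw [← hzero] at h2; exact lt_irrefl _ h2
      rw [frontier, hopen.interior_eq]; exact ⟨hxc, hxn⟩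
    obtain ⟨r, hr, hrρ, hflow⟩ := aux_flow hopen hne hρ hd hxf
    set t : ℕ → ℝ := fun k => r / (k + 2) with ht
    have htpos : ∀ k, 0 < t k := fun k => by positivity
    have htler : ∀ k, t k ≤ r / 2 := by
      intro k
      rw [ht]
      apply div_le_div_of_nonneg_left hr.le (by norm_num)
      exact le_add_of_nonneg_left (Nat.cast_nonneg k)
    have hy : ∀ k : ℕ, ∃ z ∈ Ω, dist x z < min (t k * t k) (t k) := fun k =>
      Metric.mem_closure_iff.1 hxc _ (lt_min (mul_pos (htpos k) (htpos k)) (htpos k))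
    choose y hyΩ hydist using hy
    have hyx : ∀ k, dist (y k) x < t k := by
      intro k; rw [dist_comm]; exact (hydist k).trans_le (min_le_right _ _)
    have hyx2 : ∀ k, dist (y k) x < t k * t k := by
      intro k; rw [dist_comm]; exact (hydist k).trans_le (min_le_left _ _)
    have hyr : ∀ k, dist (y k) x < r := fun k => (hyx k).trans_le ((htler k).trans (by linarith))
    have hydρ : ∀ k, d (y k) < ρ := by
      intro k
      have h1 : d (y k) ≤ dist (y k) x := infDist_le_dist_of_mem hxf
      have := htler k
      linarith [hyx k]
    set w : ℕ → E := fun k =>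
      (InnerProductSpace.toDual ℝ E).symm (fderiv ℝ d (y k)) with hw
    have hwnorm : ∀ k, ‖w k‖ = 1 := by
      intro k
      rw [hw]
      simp only [LinearIsometryEquiv.norm_map]
      exact (aux_diff hopen hne hd (hyΩ k) (hydρ k)).2
    have hflowk : ∀ k, y k + t k • w k ∈ Ω ∧ d (y k) + t k / 2 ≤ d (y k + t k • w k) :=
      fun k => hflow (y k) (hyΩ k) (hyr k) (t k) (htpos k).le ((htler k).trans (by linarith))
    set q : ℕ → E := fun k => y k + t k • w k with hq
    have hdq : ∀ k, t k / 2 ≤ d (q k) := by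
      intro k
      have := (hflowk k).2
      have h0 : (0:ℝ) ≤ d (y k) := infDist_nonneg
      linarith
    have htto : Tendsto t atTop (𝓝 0) := by
      rw [ht]
      apply Tendsto.div_atTop (tendsto_const_nhds (x := r))
      exact tendsto_atTop_add_const_right _ 2 tendsto_natCast_atTop_atTop
    -- x ∈ closure S
    have hytend : Tendsto y atTop (𝓝 x) := by
      rw [tendsto_iff_dist_tendsto_zero]
      exact squeeze_zero (fun k => dist_nonneg) (fun k => (hyx k).le) htto
    have hxS : x ∈ closure S := by
      apply mem_closure_of_tendsto hytend
      filter_upwards with k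
      exact ⟨subset_closure (hyΩ k), hydρ k⟩
    -- convergent subsequence of w
    obtain ⟨wl, hwlmem, φ, hφ, hconv⟩ := (isCompact_sphere (0:E) 1).tendsto_subseq
      (fun k => mem_sphere_zero_iff_norm.2 (hwnorm k))
    have htφto : Tendsto (fun k => t (φ k)) atTop (𝓝 0) :=
      htto.comp hφ.tendsto_atTop
    -- tangent cone membership
    have hcone : ∀ u : E, ‖u‖ < 1/2 → wl + u ∈ tangentConeAt ℝ S x := by
      intro u hu
      refine mem_tangentConeAt_of_seq atTop (fun k => (t (φ k))⁻¹)
        (fun k => (y (φ k) - x) + (t (φ k)) • (w (φ k) + u)) ?_ ?_ ?_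
      swap
      · filter_upwards with k
        have hptq : x + ((y (φ k) - x) + t (φ k) • (w (φ k) + u))
            = q (φ k) + t (φ k) • u := by
          rw [smul_add, hq]; beta_reduce; abel
        rw [hptq]
        have hdistq : dist (q (φ k) + t (φ k) • u) (q (φ k)) < t (φ k) / 2 := by
          rw [dist_eq_norm, add_sub_cancel_left, norm_smul, Real.norm_eq_abs,
            abs_of_pos (htpos (φ k))]
          calc t (φ k) * ‖u‖ < t (φ k) * (1/2) := by
                exact mul_lt_mul_of_pos_left hu (htpos (φ k))
            _ = t (φ k) / 2 := by ring
        have hzΩ : q (φ k) + t (φ k) • u ∈ Ω := by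
          apply aux_ball hopen (subset_closure (hflowk (φ k)).1)
            (aux_dpos hopen hne (hflowk (φ k)).1)
          rw [mem_ball]
          exact hdistq.trans_le (hdq (φ k))
        refine ⟨subset_closure hzΩ, ?_⟩
        have h1 : d (q (φ k) + t (φ k) • u) ≤ d (q (φ k)) + t (φ k) / 2 := by
          have := infDist_le_infDist_add_dist
            (x := q (φ k) + t (φ k) • u) (y := q (φ k)) (s := frontier Ω)
          have h2 := hdistq
          calc d (q (φ k) + t (φ k) • u) ≤ d (q (φ k))
              + dist (q (φ k) + t (φ k) • u) (q (φ k)) := this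
            _ ≤ d (q (φ k)) + t (φ k) / 2 := by linarith
        have h2 : d (q (φ k)) ≤ d (y (φ k)) + t (φ k) := by
          have h3 : dist (q (φ k)) (y (φ k)) = t (φ k) := by
            rw [hq, dist_eq_norm, add_sub_cancel_left, norm_smul, Real.norm_eq_abs,
              abs_of_pos (htpos (φ k)), hwnorm, mul_one]
          calc d (q (φ k)) ≤ d (y (φ k)) + dist (q (φ k)) (y (φ k)) :=
              infDist_le_infDist_add_dist
            _ = d (y (φ k)) + t (φ k) := by rw [h3]
        have h4 : d (y (φ k)) ≤ dist (y (φ k)) x := infDist_le_dist_of_mem hxf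
        have h5 := hyx (φ k)
        have h6 := htler (φ k)
        have h7 := htpos (φ k)
        linarith
      · have h1 : Tendsto (fun k => y (φ k) - x) atTop (𝓝 0) := by
          have := (hytend.comp hφ.tendsto_atTop).sub_const x
          rwa [sub_self] at this
        have h2 : Tendsto (fun k => t (φ k) • (w (φ k) + u)) atTop (𝓝 0) := by
          have := htφto.smul (hconv.add (tendsto_const_nhds (x := u)))
          rwa [zero_smul] at this
        rw [← add_zero (0:E)]
        exact h1.add h2
      · have heq : ∀ k, (t (φ k))⁻¹ • ((y (φ k) - x) + (t (φ k)) • (w (φ k) + u))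
            = (t (φ k))⁻¹ • (y (φ k) - x) + (w (φ k) + u) := by
          intro k
          rw [smul_add, smul_smul, inv_mul_cancel₀ (htpos (φ k)).ne', one_smul]
        rw [show (fun k => (t (φ k))⁻¹ • ((y (φ k) - x) + (t (φ k)) • (w (φ k) + u)))
          = fun k => (t (φ k))⁻¹ • (y (φ k) - x) + (w (φ k) + u) from funext heq]
        have h1 : Tendsto (fun k => (t (φ k))⁻¹ • (y (φ k) - x)) atTop (𝓝 0) := by
          rw [tendsto_zero_iff_norm_tendsto_zero]
          apply squeeze_zero (fun k => norm_nonneg _) (g := fun k => t (φ k))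
          · intro k
            rw [norm_smul, Real.norm_eq_abs, abs_of_pos (by positivity)]
            have h2 : ‖y (φ k) - x‖ ≤ t (φ k) * t (φ k) := by
              rw [← dist_eq_norm]
              exact (hyx2 (φ k)).le
            calc (t (φ k))⁻¹ * ‖y (φ k) - x‖ ≤ (t (φ k))⁻¹ * (t (φ k) * t (φ k)) := by
                  apply mul_le_mul_of_nonneg_left h2 (by positivity)
              _ = t (φ k) := by
                  field_simp
          · exact htφto
        have h2 : Tendsto (fun k => w (φ k) + u) atTop (𝓝 (wl + u)) :=
          hconv.add tendsto_const_nhds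
        have := h1.add h2
        rwa [zero_add] at this
    -- conclude
    constructor
    · have hspan : Submodule.span ℝ (tangentConeAt ℝ S x) = ⊤ := by
        rw [Submodule.eq_top_iff']
        intro v
        have hwl : wl ∈ Submodule.span ℝ (tangentConeAt ℝ S x) :=
          Submodule.subset_span (by simpa using hcone 0 (by norm_num))
        rcases eq_or_ne v 0 with hv | hv
        · rw [hv]; exact Submodule.zero_mem _
        · have hnv : 0 < ‖v‖ := norm_pos_iff.2 hv
          set u : E := (4 * ‖v‖)⁻¹ • v with hu
          have hunorm : ‖u‖ < 1/2 := by
            rw [hu, norm_smul, Real.norm_eq_abs, abs_of_pos (by positivity)]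
            rw [inv_mul_eq_div]
            rw [div_lt_iff₀ (by positivity)]
            linarith
          have h1 : wl + u ∈ Submodule.span ℝ (tangentConeAt ℝ S x) :=
            Submodule.subset_span (hcone u hunorm)
          have h2 : u ∈ Submodule.span ℝ (tangentConeAt ℝ S x) := by
            have := Submodule.sub_mem _ h1 hwl
            simpa using this
          have h3 : v = (4 * ‖v‖) • u := by
            rw [hu, smul_smul, mul_inv_cancel₀ (by positivity), one_smul]
          rw [h3]
          exact Submodule.smul_mem _ _ h2
      rw [hspan]
      simp only [Submodule.top_coe]
      exact dense_univ
    · exact hxS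

theorem aux_field {Ω : Set E} (hopen : IsOpen Ω) (hne : (frontier Ω).Nonempty) {ρ : ℝ}
    (hρ : 0 < ρ)
    (hd : ContDiffOn ℝ 2 (fun y => infDist y (frontier Ω))
      {x | x ∈ closure Ω ∧ infDist x (frontier Ω) < ρ}) :
    ContDiffOn ℝ 1
      (fderivWithin ℝ (fun y => infDist y (frontier Ω))
        {x | x ∈ closure Ω ∧ infDist x (frontier Ω) < ρ})
      {x | x ∈ closure Ω ∧ infDist x (frontier Ω) < ρ} ∧
    (∀ z ∈ Ω, infDist z (frontier Ω) < ρ →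
      fderivWithin ℝ (fun y => infDist y (frontier Ω))
        {x | x ∈ closure Ω ∧ infDist x (frontier Ω) < ρ} z
        = fderiv ℝ (fun y => infDist y (frontier Ω)) z) ∧
    (∀ x ∈ {x | x ∈ closure Ω ∧ infDist x (frontier Ω) < ρ},
      ‖fderivWithin ℝ (fun y => infDist y (frontier Ω))
        {x | x ∈ closure Ω ∧ infDist x (frontier Ω) < ρ} x‖ = 1) := by
  set d : E → ℝ := fun y => infDist y (frontier Ω) with hdd
  set S : Set E := {x | x ∈ closure Ω ∧ d x < ρ} with hS
  have hU : UniqueDiffOn ℝ S := aux_unique hopen hne hρ hd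
  have hC1 : ContDiffOn ℝ 1 (fderivWithin ℝ d S) S :=
    hd.fderivWithin hU (by norm_num)
  have hint : ∀ z ∈ Ω, d z < ρ → fderivWithin ℝ d S z = fderiv ℝ d z :=
    fun z hz hzρ => fderivWithin_of_mem_nhds (aux_S_nhds hopen hz hzρ)
  refine ⟨hC1, hint, ?_⟩
  intro x hx
  rcases (infDist_nonneg : 0 ≤ d x).lt_or_eq with hpos | hzero
  · rw [hint x (aux_memΩ hopen hx.1 hpos) hx.2]
    exact (aux_diff hopen hne hd (aux_memΩ hopen hx.1 hpos) hx.2).2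
  · -- boundary point: use continuity
    have hxf : x ∈ frontier Ω := by
      have hxn : x ∉ Ω := fun hxΩ => by
        have h2 := aux_dpos hopen hne hxΩ; rw [← hzero] at h2; exact lt_irrefl _ h2
      rw [frontier, hopen.interior_eq]; exact ⟨hx.1, hxn⟩
    -- sequence in Ω converging to x
    have hy : ∀ k : ℕ, ∃ z ∈ Ω, dist x z < 1 / (k + 1) := fun k =>
      Metric.mem_closure_iff.1 hx.1 _ (by positivity)
    choose y hyΩ hydist using hy
    have hyx : Tendsto y atTop (𝓝 x) := by
      rw [tendsto_iff_dist_tendsto_zero]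
      apply squeeze_zero (fun k => dist_nonneg) (fun k => (by
        rw [dist_comm]; exact (hydist k).le : dist (y k) x ≤ 1 / (k + 1)))
      exact tendsto_one_div_add_atTop_nhds_zero_nat
    have hydρ : ∀ᶠ k in atTop, d (y k) < ρ := by
      have hcont : Tendsto (fun k => d (y k)) atTop (𝓝 (d x)) :=
        ((continuous_infDist_pt (frontier Ω)).tendsto x).comp hyx
      have : Iio ρ ∈ 𝓝 (d x) := Iio_mem_nhds hx.2
      exact hcont this
    have hySev : ∀ᶠ k in atTop, y k ∈ S := by
      filter_upwards [hydρ] with k hk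
      exact ⟨subset_closure (hyΩ k), hk⟩
    have htendS : Tendsto y atTop (𝓝[S] x) := by
      rw [tendsto_nhdsWithin_iff]
      exact ⟨hyx, hySev⟩
    have hcont : ContinuousWithinAt (fderivWithin ℝ d S) S x :=
      (hC1.continuousOn) x hx
    have hlim : Tendsto (fun k => ‖fderivWithin ℝ d S (y k)‖) atTop
        (𝓝 ‖fderivWithin ℝ d S x‖) :=
      (continuous_norm.tendsto _).comp (hcont.tendsto.comp htendS)
    have hlim1 : Tendsto (fun k => ‖fderivWithin ℝ d S (y k)‖) atTop (𝓝 1) := by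
      apply Tendsto.congr' _ (tendsto_const_nhds (x := (1:ℝ)))
      filter_upwards [hydρ] with k hk
      rw [hint (y k) (hyΩ k) hk]
      exact ((aux_diff hopen hne hd (hyΩ k) hk).2).symm
    exact tendsto_nhds_unique hlim hlim1

theorem aux_trans {Ω : Set E} {z : E} (hz : (fun w => w + z) ⁻¹' Ω = Ω) :
    (∀ p : E, p + z ∈ frontier Ω ↔ p ∈ frontier Ω) ∧
    (∀ p : E, infDist (p + z) (frontier Ω) = infDist p (frontier Ω)) := by
  have hfront : (fun w : E => w + z) ⁻¹' (frontier Ω) = frontier Ω := by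
    have h1 := (Homeomorph.addRight z).preimage_frontier Ω
    have h2 : (Homeomorph.addRight z) ⁻¹' Ω = Ω := hz
    calc (fun w : E => w + z) ⁻¹' (frontier Ω)
        = (Homeomorph.addRight z) ⁻¹' (frontier Ω) := rfl
      _ = frontier ((Homeomorph.addRight z) ⁻¹' Ω) := h1
      _ = frontier Ω := by rw [h2]
  have hiff : ∀ p : E, p + z ∈ frontier Ω ↔ p ∈ frontier Ω := by
    intro p
    constructor
    · intro h; have : p ∈ (fun w : E => w + z) ⁻¹' (frontier Ω) := h
      rwa [hfront] at this
    · intro h; rw [← hfront] at h; exact h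
  refine ⟨hiff, ?_⟩
  intro p
  have himg : (fun w : E => w + z) '' (frontier Ω) = frontier Ω := by
    ext a
    constructor
    · rintro ⟨b, hb, rfl⟩; exact (hiff b).2 hb
    · intro ha
      exact ⟨a - z, by rwa [← hiff (a - z), sub_add_cancel], sub_add_cancel a z⟩
  have hiso : Isometry (fun w : E => w + z) :=
    Isometry.of_dist_eq (fun a b => dist_add_right a b z)
  calc infDist (p + z) (frontier Ω)
      = infDist (p + z) ((fun w : E => w + z) '' (frontier Ω)) := by rw [himg]
    _ = infDist p (frontier Ω) := infDist_image hiso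

theorem aux_fderiv_trans {Ω : Set E} (hopen : IsOpen Ω) (hne : (frontier Ω).Nonempty)
    {ρ : ℝ}
    (hd : ContDiffOn ℝ 2 (fun y => infDist y (frontier Ω))
      {x | x ∈ closure Ω ∧ infDist x (frontier Ω) < ρ})
    {z : E} (hz : (fun w => w + z) ⁻¹' Ω = Ω)
    {y : E} (hyΩ : y ∈ Ω) (hyρ : infDist y (frontier Ω) < ρ) :
    fderiv ℝ (fun w => infDist w (frontier Ω)) (y + z)
      = fderiv ℝ (fun w => infDist w (frontier Ω)) y := by
  set d : E → ℝ := fun w => infDist w (frontier Ω) with hdd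
  have hdz := (aux_trans hz).2
  have hyzΩ : y + z ∈ Ω := by
    have : y ∈ (fun w : E => w + z) ⁻¹' Ω := by rw [hz]; exact hyΩ
    exact this
  have hyzρ : d (y + z) < ρ := by rw [show d (y + z) = d y from hdz y]; exact hyρ
  have hF : HasFDerivAt d (fderiv ℝ d (y + z)) (y + z) :=
    (aux_diff hopen hne hd hyzΩ hyzρ).1
  have hline : HasFDerivAt (fun w : E => w + z) (ContinuousLinearMap.id ℝ E) y :=
    (hasFDerivAt_id y).add_const z
  have hcomp : HasFDerivAt (d ∘ fun w : E => w + z)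
      ((fderiv ℝ d (y + z)).comp (ContinuousLinearMap.id ℝ E)) y :=
    hF.comp y hline
  have hfun : (d ∘ fun w : E => w + z) = d := funext fun w => hdz w
  rw [hfun, ContinuousLinearMap.comp_id] at hcomp
  exact (hcomp.fderiv).symm

theorem aux_uniform {Ω : Set E} (hopen : IsOpen Ω) (hne : (frontier Ω).Nonempty)
    {ρ : ℝ} (hρ : 0 < ρ)
    (hd : ContDiffOn ℝ 2 (fun y => infDist y (frontier Ω))
      {x | x ∈ closure Ω ∧ infDist x (frontier Ω) < ρ})
    {C : ℝ} (htrans : ∀ p : E, ∃ z : E, ((fun w => w + z) ⁻¹' Ω = Ω) ∧ ‖p + z‖ ≤ C) :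
    ∃ ε > 0, ε < ρ / 4 ∧ ∀ y ∈ Ω, infDist y (frontier Ω) < ε → ∀ t : ℝ, 0 ≤ t → t ≤ ε →
      y + t • ((InnerProductSpace.toDual ℝ E).symm
        (fderiv ℝ (fun w => infDist w (frontier Ω)) y)) ∈ Ω ∧
      infDist y (frontier Ω) + t / 2 ≤
        infDist (y + t • ((InnerProductSpace.toDual ℝ E).symm
          (fderiv ℝ (fun w => infDist w (frontier Ω)) y))) (frontier Ω) := by
  set d : E → ℝ := fun w => infDist w (frontier Ω) with hdd
  set K : Set E := frontier Ω ∩ closedBall 0 C with hK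
  have hKcomp : IsCompact K := (isCompact_closedBall (0:E) C).inter_left isClosed_frontier
  -- choose radii by aux_flow
  have hradii : ∀ x₀ ∈ frontier Ω, ∃ r > 0, r < ρ/4 ∧ ∀ y ∈ Ω, dist y x₀ < r →
      ∀ t : ℝ, 0 ≤ t → t ≤ r →
      y + t • ((InnerProductSpace.toDual ℝ E).symm (fderiv ℝ d y)) ∈ Ω ∧
      d y + t/2 ≤ d (y + t • ((InnerProductSpace.toDual ℝ E).symm (fderiv ℝ d y))) :=
    fun x₀ hx₀ => aux_flow hopen hne hρ hd hx₀
  -- K is nonempty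
  obtain ⟨p₀, hp₀⟩ := id hne
  obtain ⟨z₀, hz₀, hz₀C⟩ := htrans p₀
  have hp₀K : p₀ + z₀ ∈ K := ⟨((aux_trans hz₀).1 p₀).2 hp₀, by
    rwa [mem_closedBall, dist_zero_right]⟩
  -- cover and finite subcover
  choose! r hrpos hrρ hrflow using hradii
  have hcover : K ⊆ ⋃ i : K, ball (i:E) (r i / 4) := by
    intro x₀ hx₀
    exact mem_iUnion.2 ⟨⟨x₀, hx₀⟩, mem_ball_self (by have := hrpos x₀ hx₀.1; linarith)⟩
  obtain ⟨t, ht⟩ := hKcomp.elim_finite_subcover (fun i : K => ball (i:E) (r i / 4))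
    (fun i => isOpen_ball) hcover
  have htne : t.Nonempty := by
    obtain ⟨i, hit, _⟩ := mem_iUnion₂.1 (ht hp₀K)
    exact ⟨i, hit⟩
  set ε : ℝ := (t.inf' htne fun i => r (i:E)) / 8 with hε
  have hεpos : 0 < ε := by
    rw [hε]
    apply div_pos _ (by norm_num)
    rw [Finset.lt_inf'_iff]
    exact fun i _ => hrpos (i:E) i.2.1
  have hεle : ∀ i ∈ t, ε ≤ r (i:E) / 8 := by
    intro i hit
    rw [hε]
    exact div_le_div_of_nonneg_right (Finset.inf'_le _ hit) (by norm_num)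
  have hερ : ε < ρ / 4 := by
    obtain ⟨i₀, hi₀⟩ := htne
    have h1 := hεle i₀ hi₀
    have h2 := hrρ (i₀:E) i₀.2.1
    have h3 := hrpos (i₀:E) i₀.2.1
    linarith
  refine ⟨ε, hεpos, hερ, ?_⟩
  intro y hyΩ hyd s hs0 hsε
  obtain ⟨p, hpΓ, hpd⟩ := isClosed_frontier.exists_infDist_eq_dist hne y
  obtain ⟨z, hzinv, hzC⟩ := htrans p
  have hdz := (aux_trans hzinv).2
  have hpzK : p + z ∈ K :=
    ⟨((aux_trans hzinv).1 p).2 hpΓ, by rwa [mem_closedBall, dist_zero_right]⟩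
  obtain ⟨i, hit, hpzball⟩ := mem_iUnion₂.1 (ht hpzK)
  have hεri := hεle i hit
  have hripos := hrpos (i:E) i.2.1
  have hyzΩ : y + z ∈ Ω := by
    have : y ∈ (fun w : E => w + z) ⁻¹' Ω := by rw [hzinv]; exact hyΩ
    exact this
  have hdyz : d (y + z) = d y := hdz y
  have hdisti : dist (y + z) (i:E) < r (i:E) := by
    have h1 : dist (y + z) (p + z) = dist y p := dist_add_right y p z
    have h2 : dist y p = d y := hpd.symm
    have h3 : dist (p + z) (i:E) < r (i:E) / 4 := mem_ball.1 hpzball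
    calc dist (y + z) (i:E) ≤ dist (y + z) (p + z) + dist (p + z) (i:E) :=
        dist_triangle _ _ _
      _ < d y + r (i:E) / 4 := by rw [h1, h2]; exact add_lt_add_of_le_of_lt le_rfl h3
      _ ≤ r (i:E) := by linarith [hyd.le.trans hεri]
  have hsri : s ≤ r (i:E) := hsε.trans (hεri.trans (by linarith))
  have hres := hrflow (i:E) i.2.1 (y + z) hyzΩ hdisti s hs0 hsri
  have hyρ : d y < ρ := by linarith [hyd, hερ]
  have hVeq : fderiv ℝ d (y + z) = fderiv ℝ d y :=
    aux_fderiv_trans hopen hne hd hzinv hyΩ hyρ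
  rw [hVeq] at hres
  set V : E := (InnerProductSpace.toDual ℝ E).symm (fderiv ℝ d y) with hV
  have hcomm : (y + z) + s • V = (y + s • V) + z := by abel
  rw [hcomm] at hres
  constructor
  · have : (y + s • V) ∈ (fun w : E => w + z) ⁻¹' Ω := hres.1
    rwa [hzinv] at this
  · have h1 := hres.2
    have h2 : d ((y + s • V) + z) = d (y + s • V) := hdz _
    rwa [hdyz, h2] at h1

theorem aux_main {Ω : Set E} (hopen : IsOpen Ω) (hne : (frontier Ω).Nonempty)
    {ρ : ℝ} (hρ : 0 < ρ)
    (hd : ContDiffOn ℝ 2 (fun y => infDist y (frontier Ω))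
      {x | x ∈ closure Ω ∧ infDist x (frontier Ω) < ρ})
    {C : ℝ} (htrans : ∀ p : E, ∃ z : E, ((fun w => w + z) ⁻¹' Ω = Ω) ∧ ‖p + z‖ ≤ C) :
    ∃ ζ : E → E, ContDiffOn ℝ 1 ζ (closure Ω) ∧
      ∀ x ∈ closure Ω, ∀ δ : ℝ, 0 < δ → δ < 1 → x + δ • ζ x ∈ Ω := by
  set d : E → ℝ := fun w => infDist w (frontier Ω) with hdd
  set S : Set E := {x | x ∈ closure Ω ∧ d x < ρ} with hSdef
  have hdcont : Continuous d := continuous_infDist_pt (frontier Ω)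
  obtain ⟨ε, hεpos, hερ, huni⟩ := aux_uniform hopen hne hρ hd htrans
  set φ : ℝ → ℝ := fun τ => Real.smoothTransition (2 - (4/ε) * τ) with hφdef
  have hφcont : ContDiff ℝ 1 φ :=
    Real.smoothTransition.contDiff.comp
      (contDiff_const.sub (contDiff_const.mul contDiff_id))
  have hφzero : ∀ τ : ℝ, ε/2 ≤ τ → φ τ = 0 := by
    intro τ hτ
    apply Real.smoothTransition.zero_of_nonpos
    have h1 : (4/ε) * (ε/2) ≤ (4/ε) * τ := by
      apply mul_le_mul_of_nonneg_left hτ (by positivity)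
    have h2 : (4/ε) * (ε/2) = 2 := by field_simp; norm_num
    linarith
  have hφpos : ∀ τ : ℝ, 0 ≤ τ → τ < ε/2 → 0 < φ τ := by
    intro τ hτ0 hτ
    apply Real.smoothTransition.pos_of_pos
    have h1 : (4/ε) * τ < (4/ε) * (ε/2) := by
      apply mul_lt_mul_of_pos_left hτ (by positivity)
    have h2 : (4/ε) * (ε/2) = 2 := by field_simp; norm_num
    linarith
  have hφle : ∀ τ : ℝ, φ τ ≤ 1 := fun τ => Real.smoothTransition.le_one _
  set g : E → (E →L[ℝ] ℝ) := fderivWithin ℝ d S with hgdef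
  obtain ⟨hgC1x, hgintx, hgnormx⟩ := aux_field hopen hne hρ hd
  have hgC1 : ContDiffOn ℝ 1 g S := hgC1x
  have hgint : ∀ z ∈ Ω, d z < ρ → g z = fderiv ℝ d z := hgintx
  have huni' : ∀ y ∈ Ω, d y < ε → ∀ t : ℝ, 0 ≤ t → t ≤ ε →
      y + t • ((InnerProductSpace.toDual ℝ E).symm (fderiv ℝ d y)) ∈ Ω ∧
      d y + t / 2 ≤ d (y + t • ((InnerProductSpace.toDual ℝ E).symm (fderiv ℝ d y))) :=
    huni
  set ζ : E → E := fun x => ((ε/4) * φ (d x)) •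
    ((InnerProductSpace.toDual ℝ E).symm (g x)) with hζdef
  -- C¹ on S
  have hvecC1 : ContDiffOn ℝ 1 (fun x => (InnerProductSpace.toDual ℝ E).symm (g x)) S := by
    have hT : ContDiff ℝ 1
        ⇑((InnerProductSpace.toDual ℝ E).symm.toContinuousLinearEquiv.toContinuousLinearMap) :=
      ((InnerProductSpace.toDual ℝ E).symm.toContinuousLinearEquiv.toContinuousLinearMap).contDiff
    have h := hT.comp_contDiffOn (s := S) hgC1
    exact h.congr (fun x _ => by simp)
  have hζC1S : ContDiffOn ℝ 1 ζ S := by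
    apply ContDiffOn.smul _ hvecC1
    exact contDiffOn_const.mul
      (hφcont.comp_contDiffOn (hd.of_le (by norm_num)))
  -- C¹ on closure Ω
  have hζC1 : ContDiffOn ℝ 1 ζ (closure Ω) := by
    intro x hx
    by_cases hxρ : d x < ρ
    · have hmem : S ∈ nhdsWithin x (closure Ω) := by
        have h1 : closure Ω ∩ {w : E | d w < ρ} ∈ nhdsWithin x (closure Ω) :=
          Filter.inter_mem self_mem_nhdsWithin
            (mem_nhdsWithin_of_mem_nhds ((isOpen_lt hdcont continuous_const).mem_nhds hxρ))
        exact Filter.mem_of_superset h1 (fun w hw => ⟨hw.1, hw.2⟩)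
      exact (hζC1S x ⟨hx, hxρ⟩).mono_of_mem_nhdsWithin hmem
    · push_neg at hxρ
      have hεlt : ε/2 < d x := by linarith
      have hopen' : IsOpen {w : E | ε/2 < d w} := isOpen_lt continuous_const hdcont
      have hev : ζ =ᶠ[nhdsWithin x (closure Ω)] (fun _ => (0:E)) := by
        filter_upwards [mem_nhdsWithin_of_mem_nhds (hopen'.mem_nhds hεlt)] with w hw
        have : φ (d w) = 0 := hφzero _ (le_of_lt hw)
        simp [hζdef, this]
      have hζx : ζ x = 0 := by
        have : φ (d x) = 0 := hφzero _ (le_of_lt hεlt)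
        simp [hζdef, this]
      exact (contDiffWithinAt_const (c := (0:E))).congr_of_eventuallyEq hev hζx
  refine ⟨ζ, hζC1, ?_⟩
  intro x hx δ hδ0 hδ1
  rcases lt_or_ge (d x) (ε/2) with hlt | hge
  · -- near the boundary
    have hstep : ∀ y, y ∈ Ω → d y < ε/2 →
        y + δ • ζ y ∈ Ω ∧ d y + (δ * ((ε/4) * φ (d y)))/2 ≤ d (y + δ • ζ y) := by
      intro y hyΩ hyd
      have hyρ : d y < ρ := by linarith
      have hδζ : δ • ζ y = (δ * ((ε/4) * φ (d y))) •
          ((InnerProductSpace.toDual ℝ E).symm (fderiv ℝ d y)) := by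
        rw [hζdef]
        rw [smul_smul]
        rw [hgint y hyΩ hyρ]
      have ht0 : 0 ≤ δ * ((ε/4) * φ (d y)) := by
        have := hφpos (d y) infDist_nonneg hyd
        positivity
      have htε : δ * ((ε/4) * φ (d y)) ≤ ε := by
        have h1 := hφle (d y)
        have h2 : 0 ≤ φ (d y) := (hφpos (d y) infDist_nonneg hyd).le
        have h3 : δ * ((ε/4) * φ (d y)) ≤ 1 * ((ε/4) * 1) := by
          apply mul_le_mul hδ1.le _ _ zero_le_one
          · exact mul_le_mul_of_nonneg_left h1 (by positivity)
          · exact mul_nonneg (by positivity) h2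
        linarith
      have hres := huni' y hyΩ (by linarith) _ ht0 htε
      rw [← hδζ] at hres
      exact hres
    by_cases hxΩ : x ∈ Ω
    · exact (hstep x hxΩ hlt).1
    · -- x is a boundary point: approximate from inside
      have hy : ∀ k : ℕ, ∃ z ∈ Ω, dist x z < 1 / (k + 1) := fun k =>
        Metric.mem_closure_iff.1 hx _ (by positivity)
      choose y hyΩ hydist using hy
      have hyx : Tendsto y atTop (𝓝 x) := by
        rw [tendsto_iff_dist_tendsto_zero]
        apply squeeze_zero (fun k => dist_nonneg) (fun k => (by
          rw [dist_comm]; exact (hydist k).le : dist (y k) x ≤ 1 / (k + 1)))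
        exact tendsto_one_div_add_atTop_nhds_zero_nat
      have hdy : Tendsto (fun k => d (y k)) atTop (𝓝 (d x)) :=
        (hdcont.tendsto x).comp hyx
      have hev2 : ∀ᶠ k in atTop, d (y k) < ε/2 := hdy (Iio_mem_nhds hlt)
      have htendS : Tendsto y atTop (nhdsWithin x (closure Ω)) := by
        rw [tendsto_nhdsWithin_iff]
        exact ⟨hyx, Filter.Eventually.of_forall fun k => subset_closure (hyΩ k)⟩
      have hΨcont : ContinuousWithinAt (fun w => w + δ • ζ w) (closure Ω) x :=
        continuousWithinAt_id.add (((hζC1 x hx).continuousWithinAt).const_smul δ)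
      have hΨtend : Tendsto (fun k => y k + δ • ζ (y k)) atTop (𝓝 (x + δ • ζ x)) :=
        hΨcont.tendsto.comp htendS
      have hΨmem : ∀ᶠ k in atTop, y k + δ • ζ (y k) ∈ Ω := by
        filter_upwards [hev2] with k hk
        exact (hstep (y k) (hyΩ k) hk).1
      have hclos : x + δ • ζ x ∈ closure Ω := mem_closure_of_tendsto hΨtend hΨmem
      have hlhs : Tendsto (fun k => d (y k) + (δ * ((ε/4) * φ (d (y k))))/2) atTop
          (𝓝 (d x + (δ * ((ε/4) * φ (d x)))/2)) := by
        apply Tendsto.add hdy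
        apply Tendsto.div_const
        apply Tendsto.const_mul
        apply Tendsto.const_mul
        exact (Real.smoothTransition.continuous.tendsto _).comp
          (((continuous_const.sub (continuous_const.mul continuous_id)).tendsto _).comp hdy)
      have hrhs : Tendsto (fun k => d (y k + δ • ζ (y k))) atTop
          (𝓝 (d (x + δ • ζ x))) := (hdcont.tendsto _).comp hΨtend
      have hineq : d x + (δ * ((ε/4) * φ (d x)))/2 ≤ d (x + δ • ζ x) := by
        apply le_of_tendsto_of_tendsto hlhs hrhs
        filter_upwards [hev2] with k hk
        exact (hstep (y k) (hyΩ k) hk).2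
      have hpos : 0 < d (x + δ • ζ x) := by
        have h1 := hφpos (d x) infDist_nonneg hlt
        have h2 : (0:ℝ) ≤ d x := infDist_nonneg
        have h3 : 0 < δ * ((ε/4) * φ (d x)) := mul_pos hδ0 (mul_pos (by positivity) h1)
        linarith
      exact aux_memΩ hopen hclos hpos
  · -- far from the boundary: ζ x = 0
    have hζx : ζ x = 0 := by
      have : φ (d x) = 0 := hφzero _ hge
      simp [hζdef, this]
    rw [hζx, smul_zero, add_zero]
    exact aux_memΩ hopen hx (by linarith)

theorem stmt_16 (n : ℕ) (Ω : Set (EuclideanSpace ℝ (Fin n)))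
    (hopen : IsOpen Ω)
    (hper : ∀ z : EuclideanSpace ℝ (Fin n), (∀ i, ∃ k : ℤ, z i = (k : ℝ)) →
      ∀ x, x ∈ Ω → x + z ∈ Ω)
    (ρ : ℝ) (hρ : 0 < ρ)
    (hd : ContDiffOn ℝ 2 (fun x => Metric.infDist x (frontier Ω))
      {x | x ∈ closure Ω ∧ Metric.infDist x (frontier Ω) < ρ}) :
    ∃ ζ : EuclideanSpace ℝ (Fin n) → EuclideanSpace ℝ (Fin n),
      ContDiffOn ℝ 1 ζ (closure Ω) ∧
      ∀ x ∈ closure Ω, ∀ δ : ℝ, 0 < δ → δ < 1 → x + δ • ζ x ∈ Ω := by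
  by_cases hfr : (frontier Ω).Nonempty
  · apply aux_main hopen hfr hρ hd (C := Real.sqrt n)
    intro p
    set z : EuclideanSpace ℝ (Fin n) := WithLp.toLp 2 (fun i => -(⌊p i⌋ : ℝ)) with hz
    have hzint : ∀ i, ∃ k : ℤ, z i = (k : ℝ) := fun i => ⟨-⌊p i⌋, by push_cast [hz]; ring⟩
    set z' : EuclideanSpace ℝ (Fin n) := WithLp.toLp 2 (fun i => (⌊p i⌋ : ℝ)) with hz'
    have hz'int : ∀ i, ∃ k : ℤ, z' i = (k : ℝ) := fun i => ⟨⌊p i⌋, rfl⟩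
    refine ⟨z, ?_, ?_⟩
    · ext w
      simp only [mem_preimage]
      constructor
      · intro hw
        have h2 := hper z' hz'int (w + z) hw
        have h3 : (w + z) + z' = w := by
          ext i
          simp [hz, hz']
        rwa [h3] at h2
      · intro hw
        exact hper z hzint w hw
    · rw [EuclideanSpace.norm_eq]
      have hsum : ∑ i, ‖(p + z) i‖ ^ 2 ≤ (n : ℝ) := by
        have hterm : ∀ i, ‖(p + z) i‖ ^ 2 ≤ 1 := by
          intro i
          have h1 : (p + z) i = Int.fract (p i) := by
            have h0 : (p + z) i = p i + z i := rfl
            rw [h0, ← Int.self_sub_floor]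
            have h2 : z i = -(⌊p i⌋ : ℝ) := rfl
            rw [h2]
            ring
          rw [h1, Real.norm_eq_abs, abs_of_nonneg (Int.fract_nonneg _), sq]
          have h2 := (Int.fract_lt_one (p i)).le
          have h3 := Int.fract_nonneg (p i)
          nlinarith
        calc ∑ i, ‖(p + z) i‖ ^ 2 ≤ ∑ _i : Fin n, (1:ℝ) :=
            Finset.sum_le_sum (fun i _ => hterm i)
          _ = (n : ℝ) := by simp
      exact Real.sqrt_le_sqrt hsum
  · refine ⟨fun _ => 0, contDiffOn_const, ?_⟩
    intro x hx δ _ _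
    rw [smul_zero, add_zero]
    have hfe : frontier Ω = ∅ := not_nonempty_iff_eq_empty.1 hfr
    have hsub : closure Ω ⊆ Ω := by
      have h1 : closure Ω \ frontier Ω = interior Ω := closure_diff_frontier Ω
      rw [hfe, diff_empty, hopen.interior_eq] at h1
      exact h1.subset
    exact hsub hx
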